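/- Let $\tilde\nu \in (0,1]$, and let $(U_n)_{n\ge1}$ and $(B_n)_{n\ge1}$ be independent sequences of i.i.d. random variables, with $U_n$ uniform on $[0,1]$ and $B_n$ having Beta$(1,\theta^*)$ distribution for some $\theta^* > 0$. Define recursively $\eta_0 = 1$, $\xi_n = \mathbf{1}\{U_n \le \tilde\nu \eta_{n-1}/(1 - \tilde\nu + \tilde\nu \eta_{n-1})\}$, $D_n = \xi_n B_n$, $\eta_n = \prod_{j=1}^n (1 - D_j)$, and $X_n = \eta_{n-1} D_n$. Then almost surely $\sum_{j=1}^n X_j = 1 - \eta_n$ for each $n$, and $\sum_{j=1}^\infty X_j = 1$ almost surely. -/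

import Mathlib

open MeasureTheory ProbabilityTheory
open scoped BigOperators ENNReal
open Filter

/-- `sbEta ν U B n` is the remaining-stick variable `η_n` of the modified stick-breaking
process: `η_0 = 1`, `η_n = η_{n-1}(1 - D_n)` with `D_n = ξ_n B_n` and
`ξ_n = 1{U_n ≤ ν η_{n-1}/(1-ν+ν η_{n-1})}` (here `U (n-1), B (n-1)` play the role of
the paper's `U_n, B_n`). -/
noncomputable def sbEta (ν : ℝ) {Ω : Type*} (U B : ℕ → Ω → ℝ) : ℕ → Ω → ℝ
  | 0 => fun _ => 1
  | n + 1 => fun ω =>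
      sbEta ν U B n ω *
        (1 - if U n ω ≤ ν * sbEta ν U B n ω / (1 - ν + ν * sbEta ν U B n ω)
             then B n ω else 0)

/-- `sbX ν U B n = X_{n+1} = η_n D_{n+1}` of the modified stick-breaking process. -/
noncomputable def sbX (ν : ℝ) {Ω : Type*} (U B : ℕ → Ω → ℝ) (n : ℕ) (ω : Ω) : ℝ :=
  sbEta ν U B n ω *
    (if U n ω ≤ ν * sbEta ν U B n ω / (1 - ν + ν * sbEta ν U B n ω)
     then B n ω else 0)

namespace SBaux

/-- selection probability -/
noncomputable def pfun (ν : ℝ) (e : ℝ) : ℝ := ν * e / (1 - ν + ν * e)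

lemma pfun_meas (ν : ℝ) : Measurable (pfun ν) :=
  (measurable_const.mul measurable_id).div
    (measurable_const.add (measurable_const.mul measurable_id))

lemma pfun_mem {ν : ℝ} (hν0 : 0 < ν) (hν1 : ν ≤ 1) {e : ℝ} (he : e ∈ Set.Icc (0:ℝ) 1) :
    pfun ν e ∈ Set.Icc (0:ℝ) 1 := by
  obtain ⟨h0, h1⟩ := he
  rcases eq_or_lt_of_le h0 with h0' | h0'
  · simp [pfun, ← h0']
  · have hD : 0 < 1 - ν + ν * e := by nlinarith
    constructor
    · exact div_nonneg (by positivity) hD.le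
    · rw [pfun, div_le_one hD]; nlinarith

lemma pfun_ge {ν : ℝ} (hν0 : 0 < ν) (hν1 : ν ≤ 1) {e : ℝ} (he : e ∈ Set.Icc (0:ℝ) 1) :
    ν * e ^ 2 ≤ e * pfun ν e := by
  obtain ⟨h0, h1⟩ := he
  rcases eq_or_lt_of_le h0 with h0' | h0'
  · simp [pfun, ← h0']
  · have hD : 0 < 1 - ν + ν * e := by nlinarith
    have : e * pfun ν e = ν * e ^ 2 / (1 - ν + ν * e) := by rw [pfun]; ring
    rw [this, le_div_iff₀ hD]
    exact mul_le_of_le_one_right (by positivity) (by nlinarith)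

variable {Ω : Type*} {ν : ℝ} {U B : ℕ → Ω → ℝ}

lemma sbEta_succ (n : ℕ) (ω : Ω) :
    sbEta ν U B (n + 1) ω = sbEta ν U B n ω *
      (1 - if U n ω ≤ pfun ν (sbEta ν U B n ω) then B n ω else 0) := rfl

lemma sbX_eq (n : ℕ) (ω : Ω) :
    sbX ν U B n ω = sbEta ν U B n ω *
      (if U n ω ≤ pfun ν (sbEta ν U B n ω) then B n ω else 0) := rfl

lemma sbEta_mem (hBr : ∀ n ω, B n ω ∈ Set.Icc (0:ℝ) 1) (n : ℕ) (ω : Ω) :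
    sbEta ν U B n ω ∈ Set.Icc (0:ℝ) 1 := by
  induction n with
  | zero => simp [sbEta]
  | succ n ih =>
    rw [sbEta_succ]
    have hd : (if U n ω ≤ pfun ν (sbEta ν U B n ω) then B n ω else 0) ∈ Set.Icc (0:ℝ) 1 := by
      split
      · exact hBr n ω
      · simp
    constructor
    · nlinarith [ih.1, ih.2, hd.1, hd.2]
    · nlinarith [ih.1, ih.2, hd.1, hd.2]

lemma sbEta_anti (hBr : ∀ n ω, B n ω ∈ Set.Icc (0:ℝ) 1) (ω : Ω) :
    Antitone fun n => sbEta ν U B n ω := by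
  apply antitone_nat_of_succ_le
  intro n
  have h := sbEta_mem (ν := ν) (U := U) hBr n ω
  have hd : (if U n ω ≤ pfun ν (sbEta ν U B n ω) then B n ω else 0) ∈ Set.Icc (0:ℝ) 1 := by
    split
    · exact hBr n ω
    · simp
  rw [sbEta_succ]
  nlinarith [h.1, h.2, hd.1, hd.2]

lemma sb_sum (n : ℕ) (ω : Ω) :
    ∑ k ∈ Finset.range n, sbX ν U B k ω = 1 - sbEta ν U B n ω := by
  induction n with
  | zero => simp [sbEta]
  | succ n ih =>
    rw [Finset.sum_range_succ, ih, sbEta_succ, sbX_eq]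
    ring

lemma sbX_nonneg (hBr : ∀ n ω, B n ω ∈ Set.Icc (0:ℝ) 1) (n : ℕ) (ω : Ω) :
    0 ≤ sbX ν U B n ω := by
  rw [sbX_eq]
  have h := sbEta_mem (ν := ν) (U := U) hBr n ω
  have hd : (if U n ω ≤ pfun ν (sbEta ν U B n ω) then B n ω else 0) ∈ Set.Icc (0:ℝ) 1 := by
    split
    · exact hBr n ω
    · simp
  nlinarith [h.1, hd.1]

lemma sbEta_meas' {m' : MeasurableSpace Ω} (n : ℕ)
    (hU : ∀ k < n, Measurable[m'] (U k)) (hB : ∀ k < n, Measurable[m'] (B k)) :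
    Measurable[m'] (sbEta ν U B n) := by
  induction n with
  | zero => exact measurable_const
  | succ n ih =>
    have ih' : Measurable[m'] (sbEta ν U B n) :=
      ih (fun k hk => hU k (hk.trans (Nat.lt_succ_self n)))
        (fun k hk => hB k (hk.trans (Nat.lt_succ_self n)))
    have hcond : MeasurableSet[m'] {ω | U n ω ≤ pfun ν (sbEta ν U B n ω)} :=
      measurableSet_le (hU n (Nat.lt_succ_self n)) ((pfun_meas ν).comp ih')
    exact ih'.mul (measurable_const.sub
      (Measurable.ite hcond (hB n (Nat.lt_succ_self n)) measurable_const))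

lemma sbEta_meas [MeasurableSpace Ω] (hU : ∀ n, Measurable (U n)) (hB : ∀ n, Measurable (B n)) (n : ℕ) :
    Measurable (sbEta ν U B n) :=
  sbEta_meas' n (fun k _ => hU k) (fun k _ => hB k)


variable {Ω : Type*} [MeasurableSpace Ω] {μ : Measure Ω}

lemma int_of_Icc [IsFiniteMeasure μ] {f : Ω → ℝ} (hf : Measurable f)
    (hr : ∀ ω, f ω ∈ Set.Icc (0:ℝ) 1) : Integrable f μ := by
  refine memLp_one_iff_integrable.mp (MemLp.of_bound hf.aestronglyMeasurable 1 ?_)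
  exact ae_of_all _ fun ω => by
    rw [Real.norm_eq_abs, abs_le]; exact ⟨by linarith [(hr ω).1], (hr ω).2⟩

lemma sq_integral_le [IsProbabilityMeasure μ] {f : Ω → ℝ} (hf : Measurable f)
    (hr : ∀ ω, f ω ∈ Set.Icc (0:ℝ) 1) :
    (∫ ω, f ω ∂μ) ^ 2 ≤ ∫ ω, (f ω) ^ 2 ∂μ := by
  have hmem : MemLp f 2 μ := by
    refine MemLp.of_bound hf.aestronglyMeasurable 1 ?_
    exact ae_of_all _ fun ω => by
      rw [Real.norm_eq_abs, abs_le]; exact ⟨by linarith [(hr ω).1], (hr ω).2⟩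
  have h := variance_nonneg f μ
  rw [variance_eq_sub hmem] at h
  simp only [Pi.pow_apply] at h
  linarith

/-- The key Fubini computation: `E[X 1{V ≤ p(X)}] = E[X p(X)]` when `X ⟂ V`,
`X ∈ [0,1]`, and `V` has CDF `x` on `[0,1]`. -/
lemma fubini_ind [IsProbabilityMeasure μ] {X V : Ω → ℝ}
    (hX : Measurable X) (hV : Measurable V)
    (hXr : ∀ ω, X ω ∈ Set.Icc (0:ℝ) 1)
    {p : ℝ → ℝ} (hp : Measurable p) (hpr : ∀ x ∈ Set.Icc (0:ℝ) 1, p x ∈ Set.Icc (0:ℝ) 1)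
    (hVd : ∀ x ∈ Set.Icc (0:ℝ) 1, μ {ω | V ω ≤ x} = ENNReal.ofReal x)
    (hind : IndepFun X V μ) :
    ∫ ω, (if V ω ≤ p (X ω) then X ω else 0) ∂μ = ∫ ω, X ω * p (X ω) ∂μ := by
  set f : ℝ × ℝ → ℝ := fun q => if q.2 ≤ p q.1 then q.1 else 0 with hf
  have hfm : Measurable f :=
    Measurable.ite (measurableSet_le measurable_snd (hp.comp measurable_fst))
      measurable_fst measurable_const
  have hpair : Measurable fun ω => (X ω, V ω) := hX.prodMk hV
  have h1 : μ.map (fun ω => (X ω, V ω)) = (μ.map X).prod (μ.map V) :=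
    (indepFun_iff_map_prod_eq_prod_map_map hX.aemeasurable hV.aemeasurable).mp hind
  have hL : ∫ ω, (if V ω ≤ p (X ω) then X ω else 0) ∂μ
      = ∫ q, f q ∂((μ.map X).prod (μ.map V)) := by
    rw [← h1, integral_map hpair.aemeasurable hfm.aestronglyMeasurable]
  rw [hL]
  have hint : Integrable f ((μ.map X).prod (μ.map V)) := by
    rw [← h1, integrable_map_measure hfm.aestronglyMeasurable hpair.aemeasurable]
    refine int_of_Icc (hfm.comp hpair) fun ω => ?_
    simp only [Function.comp_apply, hf]
    split
    · exact hXr ω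
    · exact ⟨le_refl 0, zero_le_one⟩
  rw [integral_prod f hint]
  have hae : ∀ᵐ x ∂(μ.map X), x ∈ Set.Icc (0:ℝ) 1 :=
    (ae_map_iff hX.aemeasurable measurableSet_Icc).mpr (ae_of_all _ hXr)
  have hcongr : ∀ᵐ x ∂(μ.map X), (∫ u, f (x, u) ∂(μ.map V)) = x * p x := by
    filter_upwards [hae] with x hx
    have heq : (fun u => f (x, u)) = Set.indicator (Set.Iic (p x)) (fun _ => x) := by
      funext u
      simp only [hf, Set.indicator, Set.mem_Iic]
    rw [heq, integral_indicator_const _ measurableSet_Iic]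
    have : (μ.map V) (Set.Iic (p x)) = ENNReal.ofReal (p x) := by
      rw [Measure.map_apply hV measurableSet_Iic]
      exact hVd (p x) (hpr x hx)
    rw [measureReal_def, this, smul_eq_mul, ENNReal.toReal_ofReal (hpr x hx).1]
    ring
  rw [integral_congr_ae hcongr,
    integral_map hX.aemeasurable ((show Measurable fun a : ℝ => a * p a from measurable_id'.mul hp).aestronglyMeasurable)]

/-- positive lower bound for the mean of a `Beta(1,θ)`-ish variable. -/
lemma beta_mean_pos [IsProbabilityMeasure μ] {W : Ω → ℝ} {θ : ℝ} (hθ : 0 < θ)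
    (hW : Measurable W) (hWr : ∀ ω, W ω ∈ Set.Icc (0:ℝ) 1)
    (hWd : ∀ x ∈ Set.Icc (0:ℝ) 1, μ {ω | W ω ≤ x} = ENNReal.ofReal (1 - (1 - x) ^ θ)) :
    (1/2) * ((1/2:ℝ)) ^ θ ≤ ∫ ω, W ω ∂μ := by
  have hs : MeasurableSet {ω | W ω ≤ (1/2:ℝ)} := hW measurableSet_Iic
  have hμs : μ {ω | W ω ≤ (1/2:ℝ)} = ENNReal.ofReal (1 - (1/2:ℝ) ^ θ) := by
    have := hWd (1/2) (by norm_num)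
    norm_num at this ⊢
    exact this
  have hcompl : μ {ω | W ω ≤ (1/2:ℝ)}ᶜ = ENNReal.ofReal ((1/2:ℝ) ^ θ) := by
    rw [measure_compl hs (measure_ne_top μ _), hμs, measure_univ]
    have hle1 : (1/2:ℝ) ^ θ ≤ 1 :=
      Real.rpow_le_one (by norm_num) (by norm_num) hθ.le
    rw [show (1:ℝ≥0∞) = ENNReal.ofReal (1:ℝ) by simp,
      ← ENNReal.ofReal_sub _ (by linarith)]
    congr 1
    ring
  have hle : ∀ ω, Set.indicator {ω | W ω ≤ (1/2:ℝ)}ᶜ (fun _ => (1/2:ℝ)) ω ≤ W ω := by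
    intro ω
    by_cases h : W ω ≤ (1/2:ℝ)
    · rw [Set.indicator_of_notMem (by simpa using h)]
      exact (hWr ω).1
    · rw [Set.indicator_of_mem (by simpa using h)]
      linarith [not_le.mp h]
  have hintW : Integrable W μ := int_of_Icc hW hWr
  have hind : Integrable (Set.indicator {ω | W ω ≤ (1/2:ℝ)}ᶜ (fun _ => (1/2:ℝ))) μ :=
    (integrable_const _).indicator hs.compl
  calc (1/2) * ((1/2:ℝ)) ^ θ
      = ∫ ω, Set.indicator {ω | W ω ≤ (1/2:ℝ)}ᶜ (fun _ => (1/2:ℝ)) ω ∂μ := by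
        rw [integral_indicator_const _ hs.compl, measureReal_def, hcompl, smul_eq_mul,
          ENNReal.toReal_ofReal (by positivity)]
        ring
    _ ≤ ∫ ω, W ω ∂μ := integral_mono hind hintW hle

/-- The recursion `a(n+1) ≤ a n - c a n ^ 2` with `a n ≥ 0` forces `a → 0`. -/
lemma tendsto_zero_of_rec {a : ℕ → ℝ} {c : ℝ} (hc : 0 < c) (h0 : ∀ n, 0 ≤ a n)
    (hrec : ∀ n, a (n + 1) ≤ a n - c * (a n) ^ 2) :
    Tendsto a atTop (nhds 0) := by
  have hanti : Antitone a := antitone_nat_of_succ_le fun n => by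
    nlinarith [hrec n, sq_nonneg (a n), h0 n]
  have hbdd : BddBelow (Set.range a) := ⟨0, by rintro x ⟨n, rfl⟩; exact h0 n⟩
  set L := ⨅ n, a n with hLdef
  have htend : Tendsto a atTop (nhds L) := tendsto_atTop_ciInf hanti hbdd
  have hL0 : 0 ≤ L := le_ciInf h0
  have h1 : Tendsto (fun n => a (n + 1)) atTop (nhds L) :=
    htend.comp (tendsto_add_atTop_nat 1)
  have h2 : Tendsto (fun n => a n - c * (a n) ^ 2) atTop (nhds (L - c * L ^ 2)) :=
    htend.sub (tendsto_const_nhds.mul (htend.pow 2))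
  have hLle : L ≤ L - c * L ^ 2 := le_of_tendsto_of_tendsto' h1 h2 hrec
  have h4 : L ^ 2 ≤ 0 := by
    by_contra h
    push_neg at h
    nlinarith [mul_pos hc h]
  have hL : L = 0 := by nlinarith [sq_nonneg L]
  rwa [hL] at htend

end SBaux

/-- In the modified stick-breaking process (with `(U_n)` i.i.d. uniform on `[0,1]`,
`(B_n)` i.i.d. `Beta(1,θ*)`, all mutually independent), one has
`∑_{j=1}^n X_j = 1 - η_n` surely, and `∑_{j=1}^∞ X_j = 1` almost surely. -/
theorem sb_sum_eq_one {Ω : Type*} [MeasurableSpace Ω] (μ : Measure Ω)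
    [IsProbabilityMeasure μ]
    (ν θ : ℝ) (hν0 : 0 < ν) (hν1 : ν ≤ 1) (hθ : 0 < θ)
    (U B : ℕ → Ω → ℝ)
    (hU : ∀ n, Measurable (U n)) (hB : ∀ n, Measurable (B n))
    (hUr : ∀ n ω, U n ω ∈ Set.Icc (0 : ℝ) 1)
    (hBr : ∀ n ω, B n ω ∈ Set.Icc (0 : ℝ) 1)
    (hUd : ∀ n, ∀ x ∈ Set.Icc (0 : ℝ) 1,
      μ {ω | U n ω ≤ x} = ENNReal.ofReal x)
    (hBd : ∀ n, ∀ x ∈ Set.Icc (0 : ℝ) 1,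
      μ {ω | B n ω ≤ x} = ENNReal.ofReal (1 - (1 - x) ^ θ))
    (hindep : iIndepFun (Sum.elim U B) μ) :
    (∀ n ω, ∑ k ∈ Finset.range n, sbX ν U B k ω = 1 - sbEta ν U B n ω) ∧
    (∀ᵐ ω ∂μ, HasSum (fun n => sbX ν U B n ω) 1) := by
  classical
  refine ⟨fun n ω => SBaux.sb_sum n ω, ?_⟩
  -- σ-algebra machinery
  set mco : (ℕ ⊕ ℕ) → MeasurableSpace Ω :=
    fun i => MeasurableSpace.comap (Sum.elim U B i) inferInstance with hmco
  have hle : ∀ i, mco i ≤ ‹MeasurableSpace Ω› := by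
    rintro (n | n)
    · exact measurable_iff_comap_le.mp (hU n)
    · exact measurable_iff_comap_le.mp (hB n)
  have hiI : iIndep mco μ := (iIndepFun_iff_iIndep _ _ _).mp hindep
  set mS : Set (ℕ ⊕ ℕ) → MeasurableSpace Ω := fun s => ⨆ i ∈ s, mco i with hmS
  set S : ℕ → Set (ℕ ⊕ ℕ) :=
    fun n => Sum.inl '' Set.Iio n ∪ Sum.inr '' Set.Iio n with hS
  have hmemS : ∀ (s : Set (ℕ ⊕ ℕ)) i, i ∈ s → mco i ≤ mS s :=
    fun s i hi => le_biSup mco hi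
  have hmeasOf : ∀ (s : Set (ℕ ⊕ ℕ)) (i : ℕ ⊕ ℕ), i ∈ s →
      Measurable[mS s] (Sum.elim U B i) :=
    fun s i hi => measurable_iff_comap_le.mpr (hmemS s i hi)
  have hEtaS : ∀ n, Measurable[mS (S n)] (sbEta ν U B n) := by
    intro n
    refine SBaux.sbEta_meas' n (fun k hk => ?_) (fun k hk => ?_)
    · exact hmeasOf _ (Sum.inl k) (Or.inl ⟨k, hk, rfl⟩)
    · exact hmeasOf _ (Sum.inr k) (Or.inr ⟨k, hk, rfl⟩)
  have hIndepHelp : ∀ (s t : Set (ℕ ⊕ ℕ)), Disjoint s t → ∀ X Y : Ω → ℝ,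
      Measurable[mS s] X → Measurable[mS t] Y → IndepFun X Y μ := by
    intro s t hst X Y hX hY
    rw [IndepFun_iff_Indep]
    exact indep_of_indep_of_le_left
      (indep_of_indep_of_le_right (indep_iSup_of_disjoint hle hiI hst)
        (measurable_iff_comap_le.mp hY))
      (measurable_iff_comap_le.mp hX)
  -- independence of η_n and U n
  have hIndEU : ∀ n, IndepFun (sbEta ν U B n) (U n) μ := by
    intro n
    refine hIndepHelp (S n) {Sum.inl n} ?_ _ _ (hEtaS n)
      (hmeasOf _ (Sum.inl n) rfl)
    rw [Set.disjoint_singleton_right]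
    rintro (⟨k, hk, hkeq⟩ | ⟨k, hk, hkeq⟩) <;> simp_all <;> omega
  -- the truncated variable Y n
  set Y : ℕ → Ω → ℝ := fun n ω =>
    if U n ω ≤ SBaux.pfun ν (sbEta ν U B n ω) then sbEta ν U B n ω else 0 with hY
  have hYmeas : ∀ n, Measurable (Y n) := by
    intro n
    exact Measurable.ite
      (measurableSet_le (hU n) ((SBaux.pfun_meas ν).comp (SBaux.sbEta_meas hU hB n)))
      (SBaux.sbEta_meas hU hB n) measurable_const
  have hYIcc : ∀ n ω, Y n ω ∈ Set.Icc (0:ℝ) 1 := by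
    intro n ω
    simp only [hY]
    split
    · exact SBaux.sbEta_mem hBr n ω
    · exact ⟨le_refl 0, zero_le_one⟩
  have hYS : ∀ n, Measurable[mS (S n ∪ {Sum.inl n})] (Y n) := by
    intro n
    have hη : Measurable[mS (S n ∪ {Sum.inl n})] (sbEta ν U B n) :=
      (hEtaS n).mono (biSup_mono Set.subset_union_left) le_rfl
    have hu : Measurable[mS (S n ∪ {Sum.inl n})] (U n) :=
      hmeasOf _ (Sum.inl n) (Or.inr rfl)
    exact Measurable.ite
      (measurableSet_le hu ((SBaux.pfun_meas ν).comp hη)) hη measurable_const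
  have hIndYB : ∀ n, IndepFun (Y n) (B n) μ := by
    intro n
    refine hIndepHelp (S n ∪ {Sum.inl n}) {Sum.inr n} ?_ _ _ (hYS n)
      (hmeasOf _ (Sum.inr n) rfl)
    rw [Set.disjoint_singleton_right]
    rintro ((⟨k, hk, hkeq⟩ | ⟨k, hk, hkeq⟩) | h) <;> simp_all
  -- the mean recursion
  set a : ℕ → ℝ := fun n => ∫ ω, sbEta ν U B n ω ∂μ with ha
  have hEtaMeas : ∀ n, Measurable (sbEta ν U B n) := SBaux.sbEta_meas hU hB
  have hEtaIcc : ∀ n ω, sbEta ν U B n ω ∈ Set.Icc (0:ℝ) 1 := SBaux.sbEta_mem hBr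
  have hEtaInt : ∀ n, Integrable (sbEta ν U B n) μ :=
    fun n => SBaux.int_of_Icc (hEtaMeas n) (hEtaIcc n)
  set c₀ : ℝ := (1/2) * ((1/2:ℝ)) ^ θ with hc₀
  have hc₀pos : 0 < c₀ := by
    have := Real.rpow_pos_of_pos (by norm_num : (0:ℝ) < 1/2) θ
    positivity
  have hrec : ∀ n, a (n + 1) ≤ a n - (ν * c₀) * (a n) ^ 2 := by
    intro n
    have hdecomp : ∀ ω, sbEta ν U B (n + 1) ω = sbEta ν U B n ω - Y n ω * B n ω := by
      intro ω
      rw [SBaux.sbEta_succ]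
      simp only [hY]
      by_cases h : U n ω ≤ SBaux.pfun ν (sbEta ν U B n ω) <;> simp [h] <;> ring
    have hYint : Integrable (Y n) μ := SBaux.int_of_Icc (hYmeas n) (hYIcc n)
    have hBint : Integrable (B n) μ := SBaux.int_of_Icc (hB n) (hBr n)
    have hYBint : Integrable (fun ω => Y n ω * B n ω) μ := by
      refine SBaux.int_of_Icc ((hYmeas n).mul (hB n)) fun ω => ?_
      constructor
      · exact mul_nonneg (hYIcc n ω).1 (hBr n ω).1
      · exact mul_le_one₀ (hYIcc n ω).2 (hBr n ω).1 (hBr n ω).2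
    have hstep : a (n + 1) = a n - (∫ ω, Y n ω ∂μ) * (∫ ω, B n ω ∂μ) := by
      have h1 : a (n + 1) = ∫ ω, (sbEta ν U B n ω - Y n ω * B n ω) ∂μ := by
        rw [ha]
        exact integral_congr_ae (ae_of_all _ hdecomp)
      rw [h1, integral_sub (hEtaInt n) hYBint]
      congr 1
      have := (hIndYB n).integral_mul_eq_mul_integral hYint.aestronglyMeasurable hBint.aestronglyMeasurable
      simpa [Pi.mul_apply] using this
    have hYval : ∫ ω, Y n ω ∂μ = ∫ ω, sbEta ν U B n ω * SBaux.pfun ν (sbEta ν U B n ω) ∂μ :=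
      SBaux.fubini_ind (hEtaMeas n) (hU n) (hEtaIcc n) (SBaux.pfun_meas ν)
        (fun x hx => SBaux.pfun_mem hν0 hν1 hx) (hUd n) (hIndEU n)
    have hYge : ν * (a n) ^ 2 ≤ ∫ ω, Y n ω ∂μ := by
      rw [hYval]
      have h2 : ∫ ω, ν * (sbEta ν U B n ω) ^ 2 ∂μ
          ≤ ∫ ω, sbEta ν U B n ω * SBaux.pfun ν (sbEta ν U B n ω) ∂μ := by
        refine integral_mono ?_ ?_ ?_
        · exact (SBaux.int_of_Icc ((hEtaMeas n).pow measurable_const)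
            (fun ω => ⟨by positivity, by nlinarith [(hEtaIcc n ω).1, (hEtaIcc n ω).2]⟩)).const_mul ν
        · refine SBaux.int_of_Icc ((hEtaMeas n).mul
            ((SBaux.pfun_meas ν).comp (hEtaMeas n))) fun ω => ?_
          have h3 := SBaux.pfun_mem hν0 hν1 (hEtaIcc n ω)
          exact ⟨mul_nonneg (hEtaIcc n ω).1 h3.1,
            mul_le_one₀ (hEtaIcc n ω).2 h3.1 h3.2⟩
        · exact fun ω => SBaux.pfun_ge hν0 hν1 (hEtaIcc n ω)
      have h4 : (a n) ^ 2 ≤ ∫ ω, (sbEta ν U B n ω) ^ 2 ∂μ :=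
        SBaux.sq_integral_le (hEtaMeas n) (hEtaIcc n)
      have h5 : ∫ ω, ν * (sbEta ν U B n ω) ^ 2 ∂μ = ν * ∫ ω, (sbEta ν U B n ω) ^ 2 ∂μ :=
        integral_const_mul ν _
      nlinarith [h2, h4]
    have hBge : c₀ ≤ ∫ ω, B n ω ∂μ :=
      SBaux.beta_mean_pos hθ (hB n) (hBr n) (hBd n)
    have hYnn : (0:ℝ) ≤ ν * (a n) ^ 2 := by positivity
    have hmul : (ν * (a n) ^ 2) * c₀ ≤ (∫ ω, Y n ω ∂μ) * (∫ ω, B n ω ∂μ) :=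
      mul_le_mul hYge hBge hc₀pos.le (hYnn.trans hYge)
    rw [hstep]
    nlinarith [hmul]
  have hapos : ∀ n, 0 ≤ a n := fun n => integral_nonneg fun ω => (hEtaIcc n ω).1
  have htend0 : Tendsto a atTop (nhds 0) :=
    SBaux.tendsto_zero_of_rec (by positivity) hapos hrec
  -- pointwise limit
  set l : Ω → ℝ := fun ω => ⨅ n, sbEta ν U B n ω with hl
  have hlmeas : Measurable l := Measurable.iInf fun n => hEtaMeas n
  have hbddω : ∀ ω, BddBelow (Set.range fun n => sbEta ν U B n ω) := by
    intro ω
    exact ⟨0, by rintro x ⟨n, rfl⟩; exact (hEtaIcc n ω).1⟩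
  have htendω : ∀ ω, Tendsto (fun n => sbEta ν U B n ω) atTop (nhds (l ω)) :=
    fun ω => tendsto_atTop_ciInf (SBaux.sbEta_anti hBr ω) (hbddω ω)
  have hlIcc : ∀ ω, l ω ∈ Set.Icc (0:ℝ) 1 := by
    intro ω
    constructor
    · exact le_ciInf fun n => (hEtaIcc n ω).1
    · exact (ciInf_le (hbddω ω) 0).trans (hEtaIcc 0 ω).2
  have hlInt : Integrable l μ := SBaux.int_of_Icc hlmeas hlIcc
  have htendInt : Tendsto a atTop (nhds (∫ ω, l ω ∂μ)) := by
    refine tendsto_integral_of_dominated_convergence (fun _ => (1:ℝ))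
      (fun n => (hEtaMeas n).aestronglyMeasurable) (integrable_const 1)
      (fun n => ae_of_all _ fun ω => ?_) (ae_of_all _ htendω)
    show ‖sbEta ν U B n ω‖ ≤ 1
    rw [Real.norm_eq_abs, abs_le]
    exact ⟨by linarith [(hEtaIcc n ω).1], (hEtaIcc n ω).2⟩
  have hl0 : ∫ ω, l ω ∂μ = 0 := tendsto_nhds_unique htendInt htend0
  have hl0ae : l =ᵐ[μ] 0 :=
    (integral_eq_zero_iff_of_nonneg_ae (ae_of_all _ fun ω => (hlIcc ω).1) hlInt).mp hl0
  filter_upwards [hl0ae] with ω hω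
  rw [hasSum_iff_tendsto_nat_of_nonneg (fun n => SBaux.sbX_nonneg hBr n ω) 1]
  have hsum : (fun n => ∑ k ∈ Finset.range n, sbX ν U B k ω)
      = fun n => 1 - sbEta ν U B n ω := by
    funext n
    exact SBaux.sb_sum n ω
  rw [hsum]
  simp only [Pi.zero_apply] at hω
  have h1 : Tendsto (fun n => 1 - sbEta ν U B n ω) atTop (nhds (1 - l ω)) :=
    Tendsto.sub tendsto_const_nhds (htendω ω)
  rw [hω, sub_zero] at h1
  exact h1
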